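/- Let 𝒳 = {X_1, …, X_t} be a finite set of events in a probability space with a negative dependency graph D = (𝒳, E). For each i ∈ [t] let ℛ_i be the family of all subsets R of the closed neighbourhood Γ_D*(X_i) such that R is an independent set in D (no two elements of R are adjacent in D). If there is a positive real number μ such that P(X_i) ≤ μ / (Σ_{R∈ℛ_i} μ^{|R|}) for all i ∈ [t], then P(⋂_{i∈[t]} X_iᶜ) > 0. -/

import Mathlib

set_option linter.unusedSectionVars false
set_option maxHeartbeats 1000000

open MeasureTheory

/-- `D` is a negative dependency graph for the events `X i` with respect to `μ`. -/
def IsNegDepGraph {Ω : Type*} [MeasurableSpace Ω] (μ : Measure Ω) {t : ℕ}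
    (X : Fin t → Set Ω) (D : SimpleGraph (Fin t)) : Prop :=
  ∀ (i : Fin t) (Z : Finset (Fin t)), (∀ j ∈ Z, j ≠ i ∧ ¬ D.Adj i j) →
    μ (X i ∩ ⋂ j ∈ Z, (X j)ᶜ) ≤ μ (X i) * μ (⋂ j ∈ Z, (X j)ᶜ)

namespace CELL

variable {t : ℕ} (D : SimpleGraph (Fin t)) [DecidableRel D.Adj] (μ₀ : ℝ)

def N (i : Fin t) : Finset (Fin t) := insert i (D.neighborFinset i)

def Fam (Y : Finset (Fin t)) : Finset (Finset (Fin t)) :=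
  Finset.univ.filter (fun R : Finset (Fin t) => R ⊆ Y ∧ ∀ a ∈ R, ∀ b ∈ R, ¬ D.Adj a b)

lemma mem_Fam {Y R : Finset (Fin t)} :
    R ∈ Fam D Y ↔ R ⊆ Y ∧ ∀ a ∈ R, ∀ b ∈ R, ¬ D.Adj a b := by
  simp [Fam]

noncomputable def Xi (Y : Finset (Fin t)) : ℝ := ∑ R ∈ Fam D Y, μ₀ ^ R.card

variable {D μ₀}

lemma Xi_mono (hμ : 0 < μ₀) {Y Y' : Finset (Fin t)} (h : Y ⊆ Y') : Xi D μ₀ Y ≤ Xi D μ₀ Y' := by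
  apply Finset.sum_le_sum_of_subset_of_nonneg
  · intro R hR
    rw [mem_Fam] at hR ⊢
    exact ⟨hR.1.trans h, hR.2⟩
  · intro R _ _
    positivity

lemma one_le_Xi (hμ : 0 < μ₀) (Y : Finset (Fin t)) : 1 ≤ Xi D μ₀ Y := by
  have hempty : (∅ : Finset (Fin t)) ∈ Fam D Y := by
    rw [mem_Fam]; exact ⟨Finset.empty_subset _, by simp⟩
  have := Finset.single_le_sum (f := fun R : Finset (Fin t) => μ₀ ^ R.card)
    (fun R _ => by positivity) hempty
  simpa [Xi] using this

lemma Xi_pos (hμ : 0 < μ₀) (Y : Finset (Fin t)) : 0 < Xi D μ₀ Y :=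
  lt_of_lt_of_le one_pos (one_le_Xi hμ Y)

lemma one_add_le_Xi (hμ : 0 < μ₀) {Y : Finset (Fin t)} {j : Fin t} (hj : j ∈ Y) :
    1 + μ₀ ≤ Xi D μ₀ Y := by
  have hsub : ({∅, {j}} : Finset (Finset (Fin t))) ⊆ Fam D Y := by
    intro R hR
    simp only [Finset.mem_insert, Finset.mem_singleton] at hR
    rw [mem_Fam]
    rcases hR with rfl | rfl
    · exact ⟨Finset.empty_subset _, by simp⟩
    · refine ⟨by simpa using hj, ?_⟩
      intro a ha b hb
      simp only [Finset.mem_singleton] at ha hb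
      subst ha; subst hb; exact D.irrefl
  calc 1 + μ₀ = ∑ R ∈ ({∅, {j}} : Finset (Finset (Fin t))), μ₀ ^ R.card := by
        rw [Finset.sum_pair (Finset.singleton_ne_empty j).symm]
        simp
    _ ≤ Xi D μ₀ Y := Finset.sum_le_sum_of_subset_of_nonneg hsub (fun R _ _ => by positivity)

lemma Xi_submul (hμ : 0 < μ₀) (Y W : Finset (Fin t)) :
    Xi D μ₀ Y ≤ Xi D μ₀ (Y ∩ W) * Xi D μ₀ (Y \ W) := by
  have hsplit : ∀ R : Finset (Fin t), μ₀ ^ R.card = μ₀ ^ (R ∩ W).card * μ₀ ^ (R \ W).card := by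
    intro R
    rw [← pow_add]
    congr 1
    rw [Finset.card_inter_add_card_sdiff]
  calc Xi D μ₀ Y = ∑ R ∈ Fam D Y, μ₀ ^ (R ∩ W).card * μ₀ ^ (R \ W).card := by
        unfold Xi; exact Finset.sum_congr rfl (fun R _ => hsplit R)
    _ = ∑ p ∈ (Fam D Y).image (fun R => (R ∩ W, R \ W)), μ₀ ^ p.1.card * μ₀ ^ p.2.card := by
        rw [Finset.sum_image]
        intro R hR R' hR' h
        have h1 : R ∩ W = R' ∩ W := congrArg Prod.fst h
        have h2 : R \ W = R' \ W := congrArg Prod.snd h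
        have : R ∩ W ∪ R \ W = R' ∩ W ∪ R' \ W := by rw [h1, h2]
        rwa [Finset.union_comm (R ∩ W), Finset.sdiff_union_inter,
          Finset.union_comm (R' ∩ W), Finset.sdiff_union_inter] at this
    _ ≤ ∑ p ∈ (Fam D (Y ∩ W)) ×ˢ (Fam D (Y \ W)), μ₀ ^ p.1.card * μ₀ ^ p.2.card := by
        apply Finset.sum_le_sum_of_subset_of_nonneg
        · intro p hp
          simp only [Finset.mem_image] at hp
          obtain ⟨R, hR, rfl⟩ := hp
          rw [mem_Fam] at hR
          rw [Finset.mem_product, mem_Fam, mem_Fam]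
          refine ⟨⟨Finset.inter_subset_inter_right hR.1 , ?_⟩,
            ⟨Finset.sdiff_subset_sdiff hR.1 (le_refl W), ?_⟩⟩
          · intro a ha b hb
            exact hR.2 a (Finset.mem_of_mem_inter_left ha) b (Finset.mem_of_mem_inter_left hb)
          · intro a ha b hb
            exact hR.2 a (Finset.mem_sdiff.mp ha).1 b (Finset.mem_sdiff.mp hb).1
        · intro p _ _; positivity
    _ = Xi D μ₀ (Y ∩ W) * Xi D μ₀ (Y \ W) := by
        rw [Xi, Xi, Finset.sum_mul_sum, ← Finset.sum_product']

lemma Xi_erase_add (hμ : 0 < μ₀) {Y : Finset (Fin t)} {j : Fin t} (hj : j ∈ Y) :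
    Xi D μ₀ (Y.erase j) + μ₀ * Xi D μ₀ (Y \ N D j) ≤ Xi D μ₀ Y := by
  have himg : μ₀ * Xi D μ₀ (Y \ N D j)
      = ∑ R ∈ (Fam D (Y \ N D j)).image (insert j), μ₀ ^ R.card := by
    rw [Finset.sum_image]
    · rw [Xi, Finset.mul_sum]
      apply Finset.sum_congr rfl
      intro R hR
      rw [mem_Fam] at hR
      have hjR : j ∉ R := fun h => by
        have := hR.1 h
        simp [N] at this
      rw [Finset.card_insert_of_notMem hjR, pow_succ]
      ring
    · intro R hR R' hR' h
      rw [Finset.mem_coe, mem_Fam] at hR hR'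
      have hjR : j ∉ R := fun hh => by have := hR.1 hh; simp [N] at this
      have hjR' : j ∉ R' := fun hh => by have := hR'.1 hh; simp [N] at this
      rw [← Finset.erase_insert hjR, ← Finset.erase_insert hjR', h]
  have hdisj : Disjoint (Fam D (Y.erase j)) ((Fam D (Y \ N D j)).image (insert j)) := by
    rw [Finset.disjoint_left]
    intro R hR hR'
    rw [mem_Fam] at hR
    simp only [Finset.mem_image] at hR'
    obtain ⟨R', _, rfl⟩ := hR'
    have : j ∈ Y.erase j := hR.1 (Finset.mem_insert_self j R')
    simp at this
  have hsub : Fam D (Y.erase j) ∪ (Fam D (Y \ N D j)).image (insert j) ⊆ Fam D Y := by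
    intro R hR
    rw [Finset.mem_union] at hR
    rcases hR with hR | hR
    · rw [mem_Fam] at hR ⊢
      exact ⟨hR.1.trans (Finset.erase_subset j Y), hR.2⟩
    · simp only [Finset.mem_image] at hR
      obtain ⟨R', hR', rfl⟩ := hR
      rw [mem_Fam] at hR' ⊢
      constructor
      · apply Finset.insert_subset hj
        exact hR'.1.trans (Finset.sdiff_subset)
      · intro a ha b hb
        have hnadj : ∀ c ∈ R', ¬ D.Adj j c := by
          intro c hc
          have := hR'.1 hc
          rw [Finset.mem_sdiff] at this
          intro hadj
          exact this.2 (by simp [N, hadj])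
        rcases Finset.mem_insert.mp ha with rfl | ha' <;>
          rcases Finset.mem_insert.mp hb with rfl | hb'
        · exact D.irrefl
        · exact hnadj _ hb'
        · intro hadj; exact hnadj _ ha' hadj.symm
        · exact hR'.2 a ha' b hb'
  calc Xi D μ₀ (Y.erase j) + μ₀ * Xi D μ₀ (Y \ N D j)
      = ∑ R ∈ Fam D (Y.erase j) ∪ (Fam D (Y \ N D j)).image (insert j), μ₀ ^ R.card := by
        rw [Finset.sum_union hdisj, himg, Xi]
    _ ≤ Xi D μ₀ Y := Finset.sum_le_sum_of_subset_of_nonneg hsub (fun R _ _ => by positivity)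

/-- Key inequality. -/
lemma key_ineq (hμ : 0 < μ₀) {A B : Finset (Fin t)} {j : Fin t}
    (hjA : j ∈ A) (hjB : j ∈ B) (hAB : A ∩ N D j ⊆ B) :
    Xi D μ₀ (A.erase j) * Xi D μ₀ B ≤ (Xi D μ₀ B - μ₀) * Xi D μ₀ A := by
  have h1a : Xi D μ₀ A ≤ Xi D μ₀ (A ∩ N D j) * Xi D μ₀ (A \ N D j) := Xi_submul hμ A (N D j)
  have h1b : Xi D μ₀ (A ∩ N D j) ≤ Xi D μ₀ B := Xi_mono hμ hAB
  have h1c : (0:ℝ) ≤ Xi D μ₀ (A \ N D j) := (Xi_pos (D := D) hμ (A \ N D j)).le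
  have h1 : Xi D μ₀ A ≤ Xi D μ₀ B * Xi D μ₀ (A \ N D j) :=
    le_trans h1a (mul_le_mul_of_nonneg_right h1b h1c)
  have h2 : Xi D μ₀ (A.erase j) + μ₀ * Xi D μ₀ (A \ N D j) ≤ Xi D μ₀ A := Xi_erase_add hμ hjA
  have h3 : 0 < Xi D μ₀ B := Xi_pos (D := D) hμ B
  have h4 : 0 < Xi D μ₀ (A \ N D j) := Xi_pos (D := D) hμ (A \ N D j)
  nlinarith [Xi_pos (D := D) hμ A, Xi_pos (D := D) hμ (A.erase j)]

variable {Ω : Type*} [MeasurableSpace Ω]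

def K (X : Fin t → Set Ω) (S : Finset (Fin t)) : Set Ω := ⋂ j ∈ S, (X j)ᶜ

lemma K_insert (X : Fin t → Set Ω) (j : Fin t) (T : Finset (Fin t)) :
    K X (insert j T) = (X j)ᶜ ∩ K X T := by
  simp [K, Finset.set_biInter_insert]

lemma K_anti (X : Fin t → Set Ω) {S S' : Finset (Fin t)} (h : S ⊆ S') :
    K X S' ⊆ K X S := by
  intro x hx
  simp only [K, Set.mem_iInter] at hx ⊢
  exact fun j hj => hx j (h hj)

lemma p_split (μ : Measure Ω) [IsProbabilityMeasure μ] (X : Fin t → Set Ω)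
    (hmeas : ∀ i, MeasurableSet (X i)) (j : Fin t) (T : Finset (Fin t)) :
    (μ (K X (insert j T))).toReal + (μ (X j ∩ K X T)).toReal = (μ (K X T)).toReal := by
  have h := measure_inter_add_diff (μ := μ) (K X T) (hmeas j)
  rw [Set.inter_comm, Set.diff_eq, Set.inter_comm (K X T), ← K_insert] at h
  rw [← h, ENNReal.toReal_add (measure_ne_top _ _) (measure_ne_top _ _)]
  ring

theorem main_claim (μ : Measure Ω) [IsProbabilityMeasure μ]
    (X : Fin t → Set Ω) (hmeas : ∀ i, MeasurableSet (X i))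
    (hD : IsNegDepGraph μ X D) (hμ₀ : 0 < μ₀)
    (hP : ∀ i, (μ (X i)).toReal * Xi D μ₀ (N D i) ≤ μ₀) (S : Finset (Fin t)) :
    0 < (μ (K X S)).toReal ∧ ∀ i ∉ S,
      (μ (X i ∩ K X S)).toReal * Xi D μ₀ (N D i \ S) ≤ μ₀ * (μ (K X S)).toReal := by
  classical
  induction S using Finset.strongInduction with
  | _ S IH =>
  constructor
  · -- positivity
    rcases S.eq_empty_or_nonempty with rfl | ⟨j, hjS⟩
    · simp [K]
    · obtain ⟨hpT, h2T⟩ := IH (S.erase j) (Finset.erase_ssubset hjS)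
      have hjT : j ∉ S.erase j := Finset.notMem_erase j S
      have hq := h2T j hjT
      have hΞ : 1 + μ₀ ≤ Xi D μ₀ (N D j \ S.erase j) :=
        one_add_le_Xi hμ₀ (Finset.mem_sdiff.mpr ⟨Finset.mem_insert_self _ _, hjT⟩)
      have hsplit := p_split μ X hmeas j (S.erase j)
      rw [Finset.insert_erase hjS] at hsplit
      have hqnn : (0:ℝ) ≤ (μ (X j ∩ K X (S.erase j))).toReal := ENNReal.toReal_nonneg
      nlinarith [hq, hΞ, hpT, hqnn, hsplit, hμ₀]
  · -- main bound
    intro i hiS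
    have inner : ∀ U : Finset (Fin t), U ⊆ S ∩ N D i →
        Xi D μ₀ (N D i \ U) * (μ (K X (S \ N D i))).toReal ≤
        Xi D μ₀ (N D i) * (μ (K X (U ∪ (S \ N D i)))).toReal := by
      intro U
      induction U using Finset.strongInduction with
      | _ U IHU =>
      intro hUsub
      rcases U.eq_empty_or_nonempty with rfl | ⟨j, hjU⟩
      · simp
      · have hjS : j ∈ S := (Finset.mem_inter.mp (hUsub hjU)).1
        have hjN : j ∈ N D i := (Finset.mem_inter.mp (hUsub hjU)).2
        have hjS₂ : j ∉ S \ N D i := fun h => (Finset.mem_sdiff.mp h).2 hjN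
        have hjT : j ∉ U.erase j ∪ (S \ N D i) := by
          simp only [Finset.mem_union, Finset.mem_erase]
          rintro (⟨hne, _⟩ | h)
          · exact hne rfl
          · exact hjS₂ h
        have hTsub : U.erase j ∪ (S \ N D i) ⊂ S := by
          rw [Finset.ssubset_iff_of_subset]
          · exact ⟨j, hjS, hjT⟩
          · apply Finset.union_subset
            · exact ((Finset.erase_subset _ _).trans hUsub).trans Finset.inter_subset_left
            · exact Finset.sdiff_subset
        obtain ⟨hpT, h2T⟩ := IH _ hTsub
        have hq := h2T j hjT
        have hB1 : j ∈ N D j \ (U.erase j ∪ (S \ N D i)) :=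
          Finset.mem_sdiff.mpr ⟨Finset.mem_insert_self _ _, hjT⟩
        have hA1 : j ∈ N D i \ U.erase j :=
          Finset.mem_sdiff.mpr ⟨hjN, Finset.notMem_erase j U⟩
        have hAB : (N D i \ U.erase j) ∩ N D j ⊆ N D j \ (U.erase j ∪ (S \ N D i)) := by
          intro a ha
          obtain ⟨ha1, ha2⟩ := Finset.mem_inter.mp ha
          obtain ⟨haN, haU'⟩ := Finset.mem_sdiff.mp ha1
          refine Finset.mem_sdiff.mpr ⟨ha2, ?_⟩
          rw [Finset.mem_union]
          rintro (h | h)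
          · exact haU' h
          · exact (Finset.mem_sdiff.mp h).2 haN
        have hkey := key_ineq hμ₀ hA1 hB1 hAB
        have hAe : (N D i \ U.erase j).erase j = N D i \ U := by
          ext a
          simp only [Finset.mem_erase, Finset.mem_sdiff]
          constructor
          · rintro ⟨h1, h2, h3⟩
            exact ⟨h2, fun hU => h3 ⟨h1, hU⟩⟩
          · rintro ⟨h1, h2⟩
            exact ⟨fun he => h2 (he ▸ hjU), h1, fun hU => h2 hU.2⟩
        rw [hAe] at hkey
        have hsplit := p_split μ X hmeas j (U.erase j ∪ (S \ N D i))
        have hins : insert j (U.erase j ∪ (S \ N D i)) = U ∪ (S \ N D i) := by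
          rw [← Finset.insert_union, Finset.insert_erase hjU]
        rw [hins] at hsplit
        have hIHU := IHU (U.erase j) (Finset.erase_ssubset hjU)
          ((Finset.erase_subset _ _).trans hUsub)
        have hΞB : 1 + μ₀ ≤ Xi D μ₀ (N D j \ (U.erase j ∪ (S \ N D i))) := one_add_le_Xi hμ₀ hB1
        have hp2 : (0:ℝ) ≤ (μ (K X (S \ N D i))).toReal := ENNReal.toReal_nonneg
        have hq0 : (0:ℝ) ≤ (μ (X j ∩ K X (U.erase j ∪ (S \ N D i)))).toReal := ENNReal.toReal_nonneg
        have hΞ0pos : 0 < Xi D μ₀ (N D i) := Xi_pos (D := D) hμ₀ (N D i)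
        have hΞBpos : 0 < Xi D μ₀ (N D j \ (U.erase j ∪ (S \ N D i))) := by linarith
        have step1 : Xi D μ₀ (N D i \ U) * (μ (K X (S \ N D i))).toReal
              * Xi D μ₀ (N D j \ (U.erase j ∪ (S \ N D i)))
            ≤ (Xi D μ₀ (N D j \ (U.erase j ∪ (S \ N D i))) - μ₀)
              * (Xi D μ₀ (N D i \ U.erase j) * (μ (K X (S \ N D i))).toReal) := by
          nlinarith [mul_le_mul_of_nonneg_right hkey hp2]
        have step2 : (Xi D μ₀ (N D j \ (U.erase j ∪ (S \ N D i))) - μ₀)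
              * (Xi D μ₀ (N D i \ U.erase j) * (μ (K X (S \ N D i))).toReal)
            ≤ (Xi D μ₀ (N D j \ (U.erase j ∪ (S \ N D i))) - μ₀)
              * (Xi D μ₀ (N D i) * (μ (K X (U.erase j ∪ (S \ N D i)))).toReal) :=
          mul_le_mul_of_nonneg_left hIHU (by linarith)
        have epU : (μ (K X (U ∪ (S \ N D i)))).toReal
            = (μ (K X (U.erase j ∪ (S \ N D i)))).toReal
              - (μ (X j ∩ K X (U.erase j ∪ (S \ N D i)))).toReal := by linarith
        have step3 : (Xi D μ₀ (N D j \ (U.erase j ∪ (S \ N D i))) - μ₀)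
              * (Xi D μ₀ (N D i) * (μ (K X (U.erase j ∪ (S \ N D i)))).toReal)
            ≤ Xi D μ₀ (N D i) * (μ (K X (U ∪ (S \ N D i)))).toReal
              * Xi D μ₀ (N D j \ (U.erase j ∪ (S \ N D i))) := by
          rw [epU]
          nlinarith [mul_le_mul_of_nonneg_left hq hΞ0pos.le]
        exact le_of_mul_le_mul_right (le_trans step1 (le_trans step2 step3)) hΞBpos
    have hUnion : (S ∩ N D i) ∪ (S \ N D i) = S := by
      rw [Finset.union_comm, Finset.sdiff_union_inter]
    have hinner := inner (S ∩ N D i) (Finset.Subset.refl _)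
    rw [hUnion] at hinner
    have hNS : N D i \ S = N D i \ (S ∩ N D i) := by
      ext a
      simp only [Finset.mem_sdiff, Finset.mem_inter]
      tauto
    have hZ : ∀ j ∈ S \ N D i, j ≠ i ∧ ¬ D.Adj i j := by
      intro j hj
      have hjN := (Finset.mem_sdiff.mp hj).2
      constructor
      · rintro rfl
        exact hjN (Finset.mem_insert_self _ _)
      · intro hadj
        apply hjN
        simp [N, hadj]
    have hDreal : (μ (X i ∩ K X (S \ N D i))).toReal
        ≤ (μ (X i)).toReal * (μ (K X (S \ N D i))).toReal := by
      have h2 : μ (X i ∩ K X (S \ N D i)) ≤ μ (X i) * μ (K X (S \ N D i)) := hD i (S \ N D i) hZ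
      have h3 := ENNReal.toReal_mono
        (ENNReal.mul_ne_top (measure_ne_top _ _) (measure_ne_top _ _)) h2
      rwa [ENNReal.toReal_mul] at h3
    have hmono : (μ (X i ∩ K X S)).toReal ≤ (μ (X i ∩ K X (S \ N D i))).toReal := by
      apply ENNReal.toReal_mono (measure_ne_top _ _)
      exact measure_mono (Set.inter_subset_inter_right _ (K_anti X Finset.sdiff_subset))
    have hac : (μ (X i ∩ K X S)).toReal ≤ (μ (X i)).toReal * (μ (K X (S \ N D i))).toReal :=
      le_trans hmono hDreal
    have hPi := hP i
    have hΞ0pos : 0 < Xi D μ₀ (N D i) := Xi_pos (D := D) hμ₀ (N D i)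
    have hΞ1pos : 0 < Xi D μ₀ (N D i \ (S ∩ N D i)) := Xi_pos (D := D) hμ₀ _
    have hcn : (0:ℝ) ≤ (μ (X i)).toReal := ENNReal.toReal_nonneg
    have hp2 : (0:ℝ) ≤ (μ (K X (S \ N D i))).toReal := ENNReal.toReal_nonneg
    rw [hNS]
    have t2 : ((μ (X i)).toReal * Xi D μ₀ (N D i))
          * (Xi D μ₀ (N D i \ (S ∩ N D i)) * (μ (K X (S \ N D i))).toReal)
        ≤ μ₀ * (Xi D μ₀ (N D i) * (μ (K X S)).toReal) :=
      mul_le_mul hPi hinner (by positivity) hμ₀.le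
    have t3 : ((μ (X i ∩ K X S)).toReal * Xi D μ₀ (N D i \ (S ∩ N D i))) * Xi D μ₀ (N D i)
        ≤ (μ₀ * (μ (K X S)).toReal) * Xi D μ₀ (N D i) := by
      nlinarith [mul_le_mul_of_nonneg_right
        (mul_le_mul_of_nonneg_right hac hΞ1pos.le) hΞ0pos.le]
    exact le_of_mul_le_mul_right t3 hΞ0pos

end CELL

open CELL in
/-- **Lemma 10(i)** (Bissacot–Fernández–Procacci–Scoppola, cluster-expansion local lemma,
symmetric form): if there is `μ₀ > 0` with
`P(X i) ≤ μ₀ / (Σ_{R ∈ ℛ_i} μ₀^{|R|})` for all `i`, where `ℛ_i` is the family of all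
independent subsets of the closed neighbourhood of `X i` in a negative dependency graph `D`,
then with positive probability no event occurs. -/
theorem cluster_expansion_local_lemma_symmetric
    {Ω : Type*} [MeasurableSpace Ω] (μ : Measure Ω) [IsProbabilityMeasure μ]
    {t : ℕ} (X : Fin t → Set Ω) (hmeas : ∀ i, MeasurableSet (X i))
    (D : SimpleGraph (Fin t)) [DecidableRel D.Adj]
    (hD : IsNegDepGraph μ X D)
    (μ₀ : ℝ) (hμ₀ : 0 < μ₀)
    (hP : ∀ i, μ (X i) ≤ ENNReal.ofReal (μ₀ /
      ∑ R ∈ Finset.univ.filter (fun R : Finset (Fin t) =>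
          R ⊆ insert i (D.neighborFinset i) ∧ ∀ a ∈ R, ∀ b ∈ R, ¬ D.Adj a b),
        μ₀ ^ R.card)) :
    0 < μ (⋂ i, (X i)ᶜ) := by
  classical
  have hXi_eq : ∀ i : Fin t, Xi D μ₀ (N D i) =
      ∑ R ∈ Finset.univ.filter (fun R : Finset (Fin t) =>
          R ⊆ insert i (D.neighborFinset i) ∧ ∀ a ∈ R, ∀ b ∈ R, ¬ D.Adj a b),
        μ₀ ^ R.card := by
    intro i
    rw [Xi]
    apply Finset.sum_congr _ (fun _ _ => rfl)
    apply Finset.filter_congr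
    intro R _
    rfl
  have hPreal : ∀ i, (μ (X i)).toReal * Xi D μ₀ (N D i) ≤ μ₀ := by
    intro i
    have hΞpos : 0 < Xi D μ₀ (N D i) := Xi_pos (D := D) hμ₀ (N D i)
    have h1 : (μ (X i)).toReal ≤ μ₀ / Xi D μ₀ (N D i) := by
      apply ENNReal.toReal_le_of_le_ofReal (le_of_lt (div_pos hμ₀ hΞpos))
      rw [hXi_eq i]
      exact hP i
    calc (μ (X i)).toReal * Xi D μ₀ (N D i)
        ≤ (μ₀ / Xi D μ₀ (N D i)) * Xi D μ₀ (N D i) :=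
          mul_le_mul_of_nonneg_right h1 hΞpos.le
      _ = μ₀ := div_mul_cancel₀ μ₀ hΞpos.ne'
  obtain ⟨hpos, -⟩ := main_claim μ X hmeas hD hμ₀ hPreal Finset.univ
  have hKuniv : K X Finset.univ = ⋂ i, (X i)ᶜ := by
    simp [K]
  rw [hKuniv] at hpos
  exact (ENNReal.toReal_pos_iff.mp hpos).1
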